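/- arXiv:math/0612527 — 2 statements merged into one kernel-verified Lean document; each statement's English description precedes it below -/
import Mathlib

section
/- Let n and j be integers with 0 ≤ 2j ≤ n, let Y be a harmonic homogeneous polynomial of degree n−2j in d variables, let q be a real polynomial of one variable of degree j, and set β = n−2j+(d−2)/2 and R(x) = q(2‖x‖²−1)·Y(x). Then for all x ∈ ℝ^d, Δ[(1−‖x‖²)·R(x)] = 4·(𝒥_β q)(2‖x‖²−1)·Y(x), where (𝒥_β q)(s) := (1−s²)q''(s) + (β−1−(β+3)s)q'(s) − (β+1)q(s) and Δ is the Laplace operator on ℝ^d. -/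
open MvPolynomial

noncomputable section

/-- The Laplace operator `Δ = ∑ ∂²/∂x_i²` on polynomials in `d` variables. -/
def mvLaplacian {d : ℕ} (p : MvPolynomial (Fin d) ℝ) : MvPolynomial (Fin d) ℝ :=
  ∑ i : Fin d, pderiv i (pderiv i p)

/-- The polynomial `‖x‖² = x₁² + ⋯ + x_d²`. -/
def sumSq (d : ℕ) : MvPolynomial (Fin d) ℝ := ∑ i : Fin d, X i ^ 2

/-- The operator `𝒥_β q = (1-s²)q'' + (β-1-(β+3)s)q' - (β+1)q` on one-variable polynomials. -/
def Jop (β : ℝ) (q : Polynomial ℝ) : Polynomial ℝ :=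
  (1 - Polynomial.X ^ 2) * q.derivative.derivative +
    (Polynomial.C (β - 1) - Polynomial.C (β + 3) * Polynomial.X) * q.derivative -
    Polynomial.C (β + 1) * q

lemma pderiv_sumSq {d : ℕ} (i : Fin d) : pderiv i (sumSq d) = 2 * X i := by
  simp [sumSq, pderiv_pow, pderiv_X, Pi.single_apply, Finset.sum_ite_eq', mul_comm]

lemma eulerMon {d : ℕ} (s : Fin d →₀ ℕ) (a : ℝ) :
    ∑ i : Fin d, X i * pderiv i (monomial s a) = (∑ i : Fin d, (s i : ℝ)) • monomial s a := by
  rw [Finset.sum_smul]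
  refine Finset.sum_congr rfl fun i _ => ?_
  rw [pderiv_monomial]
  rcases Nat.eq_zero_or_pos (s i) with h | h
  · simp [h]
  · rw [X, monomial_mul, add_tsub_cancel_of_le (Finsupp.single_le_iff.mpr h)]
    rw [smul_monomial]
    congr 1; rw [smul_eq_mul]; ring

lemma euler {d m : ℕ} (p : MvPolynomial (Fin d) ℝ) (hp : p.IsHomogeneous m) :
    ∑ i : Fin d, X i * pderiv i p = (m : ℝ) • p := by
  conv_lhs => rw [p.as_sum]
  simp_rw [map_sum, Finset.mul_sum]
  rw [Finset.sum_comm]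
  conv_rhs => rw [p.as_sum, Finset.smul_sum]
  refine Finset.sum_congr rfl fun s hs => ?_
  rw [eulerMon]
  congr 1
  have hdeg : s.degree = m := by
    rw [Finsupp.degree_eq_weight_one]; exact hp (MvPolynomial.mem_support_iff.mp hs)
  rw [← hdeg, Finsupp.degree,
    ← Finset.sum_subset (Finset.subset_univ s.support) (by simp +contextual)]
  push_cast
  exact (Nat.cast_sum s.support s).symm

lemma pderiv_aeval_sumSq {d : ℕ} (i : Fin d) (g : Polynomial ℝ) :
    pderiv i (Polynomial.aeval (sumSq d) g) =
      Polynomial.aeval (sumSq d) g.derivative * (2 * X i) := by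
  rw [Derivation.comp_aeval_eq, pderiv_sumSq, smul_eq_mul]

lemma lap_aeval_mul {d m : ℕ} (Y : MvPolynomial (Fin d) ℝ) (hYhom : Y.IsHomogeneous m)
    (hYharm : mvLaplacian Y = 0) (g : Polynomial ℝ) :
    mvLaplacian (Polynomial.aeval (sumSq d) g * Y) =
      Polynomial.aeval (sumSq d)
        (4 * Polynomial.X * g.derivative.derivative
          + Polynomial.C ((2 * d : ℝ) + 4 * m) * g.derivative) * Y := by
  have hE := euler Y hYhom
  have h2 : ∀ i : Fin d, pderiv i ((2 : MvPolynomial (Fin d) ℝ) * X i) = 2 := by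
    intro i; rw [two_mul]; simp; norm_num
  have hC2 : ∀ i : Fin d, pderiv i (2 : MvPolynomial (Fin d) ℝ) = 0 := by
    intro i
    rw [← one_add_one_eq_two, map_add, Derivation.map_one_eq_zero, add_zero]
  have step : ∀ i : Fin d,
      pderiv i (pderiv i (Polynomial.aeval (sumSq d) g * Y)) =
        Polynomial.aeval (sumSq d) g.derivative.derivative * (4 * X i ^ 2) * Y
        + 2 * Polynomial.aeval (sumSq d) g.derivative * Y
        + 4 * Polynomial.aeval (sumSq d) g.derivative * (X i * pderiv i Y)
        + Polynomial.aeval (sumSq d) g * pderiv i (pderiv i Y) := by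
    intro i
    simp only [pderiv_mul, pderiv_aeval_sumSq, map_add, pderiv_X_self, hC2]
    ring
  unfold mvLaplacian
  rw [Finset.sum_congr rfl fun i _ => step i]
  simp only [Finset.sum_add_distrib, ← Finset.sum_mul, ← Finset.mul_sum]
  rw [hE]
  have hharm : Polynomial.aeval (sumSq d) g * ∑ i : Fin d, pderiv i (pderiv i Y) = 0 := by
    rw [show (∑ i : Fin d, pderiv i (pderiv i Y)) = mvLaplacian Y from rfl, hYharm, mul_zero]
  rw [hharm]
  simp only [map_add, map_mul, map_ofNat, map_natCast, Polynomial.aeval_X,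
    MvPolynomial.algebraMap_eq, Finset.sum_const, Finset.card_univ, Fintype.card_fin,
    nsmul_eq_mul, MvPolynomial.smul_eq_C_mul]
  rw [show (∑ i : Fin d, X i ^ 2) = sumSq d from rfl]
  ring

lemma eval_polyAeval {d : ℕ} (x : Fin d → ℝ) (S : MvPolynomial (Fin d) ℝ) (P : Polynomial ℝ) :
    eval x (Polynomial.aeval S P) = Polynomial.eval (eval x S) P := by
  have h : eval x (Polynomial.aeval S P) = MvPolynomial.aeval x (Polynomial.aeval S P) := by
    rw [← MvPolynomial.coe_aeval_eq_eval]; rfl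
  rw [h, ← Polynomial.aeval_algHom_apply, ← Polynomial.coe_aeval_eq_eval]
  congr 1

/-- Lemma 2.1: if `Y` is a harmonic polynomial, homogeneous of degree
`n - 2j`, `q` is a one-variable polynomial of degree `j`, `β = n - 2j + (d-2)/2` and
`R(x) = q(2‖x‖²-1) Y(x)`, then `Δ[(1-‖x‖²) R(x)] = 4 (𝒥_β q)(2‖x‖²-1) Y(x)`. -/
theorem stmt0 (d : ℕ) (hd : 2 ≤ d) (n j : ℕ) (hjn : 2 * j ≤ n)
    (Y : MvPolynomial (Fin d) ℝ) (hYhom : Y.IsHomogeneous (n - 2 * j))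
    (hYharm : mvLaplacian Y = 0)
    (q : Polynomial ℝ) (hq : q.natDegree = j)
    (β : ℝ) (hβ : β = (n : ℝ) - 2 * (j : ℝ) + ((d : ℝ) - 2) / 2)
    (R : MvPolynomial (Fin d) ℝ)
    (hR : R = Polynomial.aeval (2 * sumSq d - 1) q * Y) :
    ∀ x : Fin d → ℝ,
      eval x (mvLaplacian ((1 - sumSq d) * R)) =
        4 * Polynomial.eval (2 * ∑ i, x i ^ 2 - 1) (Jop β q) * eval x Y := by
  intro x
  set g : Polynomial ℝ := (1 - Polynomial.X) * (q.comp (2 * Polynomial.X - 1)) with hg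
  have hcomp : Polynomial.aeval (sumSq d) (q.comp (2 * Polynomial.X - 1)) =
      Polynomial.aeval (2 * sumSq d - 1) q := by
    rw [Polynomial.aeval_comp]
    congr 1
    simp [map_ofNat]
  have hRg : (1 - sumSq d) * R = Polynomial.aeval (sumSq d) g * Y := by
    rw [hR, hg, map_mul, hcomp, map_sub, map_one, Polynomial.aeval_X]
    ring
  rw [hRg, lap_aeval_mul Y hYhom hYharm g, map_mul, eval_polyAeval]
  have hS : eval x (sumSq d) = ∑ i, x i ^ 2 := by simp [sumSq]
  rw [hS]
  set t : ℝ := ∑ i, x i ^ 2 with ht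
  have hmr : ((n - 2 * j : ℕ) : ℝ) = (n : ℝ) - 2 * (j : ℝ) := by
    push_cast [hjn]; ring
  have hg1 : g.derivative = -(q.comp (2 * Polynomial.X - 1)) +
      (1 - Polynomial.X) * (q.derivative.comp (2 * Polynomial.X - 1) * 2) := by
    rw [hg]
    simp only [Polynomial.derivative_mul, Polynomial.derivative_comp, Polynomial.derivative_sub,
      Polynomial.derivative_one, Polynomial.derivative_X, Polynomial.derivative_ofNat]
    ring
  have hg2 : g.derivative.derivative =
      -4 * (q.derivative.comp (2 * Polynomial.X - 1)) +
      (1 - Polynomial.X) * (q.derivative.derivative.comp (2 * Polynomial.X - 1) * 4) := by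
    rw [hg1]
    simp only [Polynomial.derivative_add, Polynomial.derivative_neg, Polynomial.derivative_mul,
      Polynomial.derivative_comp, Polynomial.derivative_sub, Polynomial.derivative_one,
      Polynomial.derivative_X, Polynomial.derivative_ofNat]
    ring
  have key1 : Polynomial.eval t (4 * Polynomial.X * g.derivative.derivative +
        Polynomial.C ((2 * d : ℝ) + 4 * (n - 2 * j : ℕ)) * g.derivative) =
      4 * Polynomial.eval (2 * t - 1) (Jop β q) := by
    rw [hg2, hg1]
    simp only [Jop, Polynomial.eval_add, Polynomial.eval_mul, Polynomial.eval_sub,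
      Polynomial.eval_neg, Polynomial.eval_one, Polynomial.eval_X, Polynomial.eval_C,
      Polynomial.eval_comp, Polynomial.eval_ofNat, Polynomial.eval_pow, hmr]
    rw [hβ]
    ring
  rw [key1]
end
end

section
/- Let n ≥ 0 and 0 ≤ j ≤ n/2, 1 ≤ ν ≤ σ_{n−2j}, and let x' ∈ S^{d−1}. Then the radial derivative of U_{j,ν}^n at the boundary satisfies (d/dr) U_{0,ν}^n(r x')|_{r=1} = n·Y_ν^n(x'), and for j ≥ 1, (d/dr) U_{j,ν}^n(r x')|_{r=1} = −2j·Y_ν^{n−2j}(x'). Moreover U_{0,ν}^n(x') = Y_ν^n(x') and U_{j,ν}^n(x') = 0 for j ≥ 1 and x' ∈ S^{d−1}. -/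
open MeasureTheory Metric MvPolynomial RealInnerProductSpace

noncomputable section

/-- Generalized binomial coefficient `C(z, k)` for real `z`. -/
def genBinom (z : ℝ) (k : ℕ) : ℝ := (∏ i ∈ Finset.range k, (z - i)) / (Nat.factorial k)

/-- The Jacobi polynomial `P_n^{(a,b)}`, normalized so that `P_n^{(a,b)}(1) = C(n+a, n)`. -/
def jacobiPoly (n : ℕ) (a b : ℝ) : Polynomial ℝ :=
  ∑ s ∈ Finset.range (n + 1),
    Polynomial.C (genBinom ((n : ℝ) + a) (n - s) * genBinom ((n : ℝ) + b) s) *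
      (Polynomial.C (2⁻¹) * (Polynomial.X - 1)) ^ s *
      (Polynomial.C (2⁻¹) * (Polynomial.X + 1)) ^ (n - s)

/-- The Jacobi polynomial as a real function. -/
def jacobiR (n : ℕ) (a b x : ℝ) : ℝ := (jacobiPoly n a b).eval x

/-- `σ_m`, the dimension of the space of spherical harmonics of degree `m` in `d` variables. -/
def sigmaDim (d m : ℕ) : ℕ := (m + d - 1).choose (d - 1) - (m + d - 3).choose (d - 1)

/-- The surface area `ω_d = 2 π^{d/2} / Γ(d/2)` of the unit sphere `S^{d-1}`. -/
def omegaD (d : ℕ) : ℝ := 2 * Real.pi ^ ((d : ℝ) / 2) / Real.Gamma ((d : ℝ) / 2)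

/-- Euclidean space `ℝ^d`. -/
abbrev Edim (d : ℕ) := EuclideanSpace ℝ (Fin d)

/-- Evaluation of a polynomial in `d` variables at a point of `ℝ^d`. -/
def pEval {d : ℕ} (p : MvPolynomial (Fin d) ℝ) (x : Edim d) : ℝ := eval (fun i => x i) p

/-- The surface measure `dω` on the unit sphere `S^{d-1}`. -/
def sphMeasure (d : ℕ) : Measure (sphere (0 : Edim d) 1) :=
  (volume : Measure (Edim d)).toSphere

/-- The Sobolev inner product `⟨f,g⟩_I`. -/
def innerI (d : ℕ) (lam : ℝ) (f g : Edim d → ℝ) : ℝ :=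
  (lam / omegaD d) * ∫ x in closedBall (0 : Edim d) 1, ⟪gradient f x, gradient g x⟫ +
    (1 / omegaD d) * ∫ y : sphere (0 : Edim d) 1, f y * g y ∂(sphMeasure d)

/-- The Sobolev inner product `⟨f,g⟩_II`. -/
def innerII (d : ℕ) (lam : ℝ) (f g : Edim d → ℝ) : ℝ :=
  (lam / omegaD d) * ∫ x in closedBall (0 : Edim d) 1, ⟪gradient f x, gradient g x⟫ +
    f 0 * g 0

/-- The polynomials `U_{j,ν}^n`. -/
def Upoly (d : ℕ) (Y : (m : ℕ) → Fin (sigmaDim d m) → MvPolynomial (Fin d) ℝ)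
    (n j : ℕ) (ν : Fin (sigmaDim d (n - 2 * j))) : MvPolynomial (Fin d) ℝ :=
  if j = 0 then Y (n - 2 * j) ν
  else (1 - sumSq d) *
      Polynomial.aeval (2 * sumSq d - 1)
        (jacobiPoly (j - 1) 1 ((n : ℝ) - 2 * (j : ℝ) + ((d : ℝ) - 2) / 2)) *
      Y (n - 2 * j) ν



lemma eval_scale {d n : ℕ} {p : MvPolynomial (Fin d) ℝ} (hp : p.IsHomogeneous n)
    (t : ℝ) (x : Fin d → ℝ) :
    eval (fun i => t * x i) p = t ^ n * eval x p := by
  rw [eval_eq, eval_eq, Finset.mul_sum]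
  refine Finset.sum_congr rfl fun m hm => ?_
  have hdeg : ∑ i ∈ m.support, m i = n := by
    have := hp (mem_support_iff.mp hm)
    simpa [Finsupp.weight_apply, Finsupp.sum] using this
  have h1 : ∏ i ∈ m.support, (t * x i) ^ m i = t ^ n * ∏ i ∈ m.support, x i ^ m i := by
    simp only [mul_pow, Finset.prod_mul_distrib, Finset.prod_pow_eq_pow_sum, hdeg]
  rw [h1]; ring

lemma genBinom_zero' (z : ℝ) : genBinom z 0 = 1 := by simp [genBinom]

lemma prod_desc (k : ℕ) : ∏ i ∈ Finset.range k, (((k:ℝ) + 1) - i) = (k+1).factorial := by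
  induction k with
  | zero => simp
  | succ k ih =>
    rw [Finset.prod_range_succ']
    push_cast
    have : ∀ i ∈ Finset.range k, ((k:ℝ) + 1 + 1 - ((i:ℝ) + 1)) = ((k:ℝ)+1) - i := by
      intro i _; ring
    rw [Finset.prod_congr rfl this, ih]
    push_cast [Nat.factorial_succ]
    ring

lemma genBinom_succ_self (k : ℕ) : genBinom ((k:ℝ) + 1) k = (k:ℝ) + 1 := by
  rw [genBinom, prod_desc, Nat.factorial_succ]
  push_cast
  rw [mul_div_assoc, div_self (by positivity), mul_one]

lemma jacobi_eval_one (n : ℕ) (a b : ℝ) :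
    (jacobiPoly n a b).eval 1 = genBinom ((n:ℝ) + a) n := by
  rw [jacobiPoly, Polynomial.eval_finset_sum]
  rw [Finset.sum_eq_single 0]
  · norm_num [genBinom_zero']
  · intro s hs hs0
    simp [Polynomial.eval_pow, zero_pow hs0]
  · simp

lemma eval_aeval_poly {d : ℕ} (q : MvPolynomial (Fin d) ℝ) (J : Polynomial ℝ) (y : Fin d → ℝ) :
    eval y (Polynomial.aeval q J) = J.eval (eval y q) := by
  rw [Polynomial.aeval_def, Polynomial.eval₂_eq_sum, Polynomial.eval_eq_sum]
  simp [Polynomial.sum, map_sum]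

lemma sum_sq_one {d : ℕ} (x' : EuclideanSpace ℝ (Fin d)) (h : ‖x'‖ = 1) :
    ∑ i, (x' i)^2 = 1 := by
  have heq := EuclideanSpace.norm_eq x'
  rw [h] at heq
  have h2 : Real.sqrt (∑ i, ‖x' i‖^2) = 1 := heq.symm
  have := Real.sqrt_eq_one.mp h2
  simpa [sq_abs] using this

/-- boundary values and radial derivatives of `U_{j,ν}^n` on the unit sphere:
`(d/dr)U_{0,ν}^n(rx')|_{r=1} = n Y_ν^n(x')`, `(d/dr)U_{j,ν}^n(rx')|_{r=1} = -2j Y_ν^{n-2j}(x')`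
for `j ≥ 1`, `U_{0,ν}^n(x') = Y_ν^n(x')`, and `U_{j,ν}^n(x') = 0` for `j ≥ 1`. -/
theorem stmt6 (d : ℕ) (hd : 2 ≤ d)
    (Y : (m : ℕ) → Fin (sigmaDim d m) → MvPolynomial (Fin d) ℝ)
    (hYhom : ∀ m ν, (Y m ν).IsHomogeneous m)
    (hYharm : ∀ m ν, mvLaplacian (Y m ν) = 0)
    (hYon : ∀ (m k : ℕ) (ν : Fin (sigmaDim d m)) (μ : Fin (sigmaDim d k)),
      (1 / omegaD d) * ∫ y : sphere (0 : Edim d) 1,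
          pEval (Y m ν) y * pEval (Y k μ) y ∂(sphMeasure d) =
        if m = k ∧ (ν : ℕ) = (μ : ℕ) then 1 else 0)
    (n : ℕ) (x' : Edim d) (hx' : ‖x'‖ = 1) :
    (∀ ν : Fin (sigmaDim d (n - 2 * 0)),
      deriv (fun t : ℝ => pEval (Upoly d Y n 0 ν) (t • x')) 1 =
          (n : ℝ) * pEval (Y (n - 2 * 0) ν) x' ∧
        pEval (Upoly d Y n 0 ν) x' = pEval (Y (n - 2 * 0) ν) x') ∧
    (∀ j : ℕ, 1 ≤ j → 2 * j ≤ n → ∀ ν : Fin (sigmaDim d (n - 2 * j)),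
      deriv (fun t : ℝ => pEval (Upoly d Y n j ν) (t • x')) 1 =
          -2 * (j : ℝ) * pEval (Y (n - 2 * j) ν) x' ∧
        pEval (Upoly d Y n j ν) x' = 0) := by
  have hx2 : ∑ i, (x' i)^2 = 1 := sum_sq_one x' hx'
  have hpt : ∀ t : ℝ, (fun i => (t • x') i) = fun i => t * x' i := by
    intro t; funext i; simp
  have hevalS : ∀ t : ℝ, eval (fun i => t * x' i) (sumSq d) = t^2 := by
    intro t
    simp only [sumSq, map_sum, map_pow, eval_X, mul_pow]
    rw [← Finset.mul_sum, hx2, mul_one]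
  constructor
  · intro ν
    have hU : Upoly d Y n 0 ν = Y (n - 2*0) ν := by simp [Upoly]
    set c := pEval (Y (n - 2*0) ν) x' with hc
    have hfun : (fun t : ℝ => pEval (Upoly d Y n 0 ν) (t • x')) =
        fun t => c * t ^ (n - 2*0) := by
      funext t
      rw [hU, pEval, hpt t, eval_scale (hYhom _ _) t (fun i => x' i)]
      rw [hc, pEval]; ring
    refine ⟨?_, by rw [hU]⟩
    rw [hfun]
    rw [((hasDerivAt_pow (n - 2*0) (1:ℝ)).const_mul c).deriv]
    simp [mul_comm]
  · intro j hj hjn ν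
    have hj0 : j ≠ 0 := by omega
    set J := jacobiPoly (j - 1) 1 ((n : ℝ) - 2 * (j : ℝ) + ((d : ℝ) - 2) / 2) with hJ
    have hU : Upoly d Y n j ν =
        (1 - sumSq d) * Polynomial.aeval (2 * sumSq d - 1) J * Y (n - 2*j) ν := by
      rw [Upoly, if_neg hj0]
    have hfun : (fun t : ℝ => pEval (Upoly d Y n j ν) (t • x')) =
        fun t => (1 - t^2) * J.eval (2*t^2 - 1) * (t^(n - 2*j) * pEval (Y (n - 2*j) ν) x') := by
      funext t
      rw [pEval, hpt t, hU, map_mul, map_mul, map_sub, map_one, hevalS t,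
        eval_aeval_poly, map_sub, map_mul, map_one, hevalS t,
        eval_scale (hYhom _ _) t (fun i => x' i)]
      rw [pEval]
      norm_num
    have hJ1 : J.eval 1 = (j : ℝ) := by
      rw [hJ, jacobi_eval_one, genBinom_succ_self]
      have h1j : (1:ℕ) ≤ j := hj
      push_cast [Nat.cast_sub h1j]
      ring
    have h1 : HasDerivAt (fun t : ℝ => 1 - t^2) (-2) 1 := by
      have h := (hasDerivAt_pow 2 (1:ℝ)).const_sub 1
      norm_num at h
      exact h
    have hin : HasDerivAt (fun t : ℝ => 2*t^2 - 1) 4 1 := by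
      have h := ((hasDerivAt_pow 2 (1:ℝ)).const_mul 2).sub_const 1
      norm_num at h
      simpa using h
    have hpt1 : (2*(1:ℝ)^2 - 1) = 1 := by norm_num
    have hJd := J.hasDerivAt (2*(1:ℝ)^2 - 1)
    have h2 : HasDerivAt (fun t : ℝ => J.eval (2*t^2 - 1))
        (J.derivative.eval (2*(1:ℝ)^2 - 1) * 4) 1 :=
      HasDerivAt.comp (h₂ := fun y => J.eval y) (h := fun t : ℝ => 2*t^2 - 1) 1 hJd hin
    have h3 : HasDerivAt (fun t : ℝ => t^(n - 2*j) * pEval (Y (n - 2*j) ν) x')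
        (((n - 2*j : ℕ):ℝ) * pEval (Y (n - 2*j) ν) x') 1 := by
      have h := (hasDerivAt_pow (n - 2*j) (1:ℝ)).mul_const (pEval (Y (n - 2*j) ν) x')
      simpa using h
    have hprod : HasDerivAt (fun t : ℝ => (1 - t^2) * J.eval (2*t^2 - 1) * (t^(n - 2*j) * pEval (Y (n - 2*j) ν) x')) _ 1 := (h1.mul h2).mul h3
    constructor
    · rw [hfun, hprod.deriv, hpt1, hJ1]
      norm_num
    · have hv := congrFun hfun 1
      rw [one_smul] at hv
      rw [hv]
      norm_num
end
end
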